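/- For every positive integer n, τ₃(n)² ≤ Σ_{d|n} τ(n/d)²/τ(d) · Σ_{d|n, d ≤ n^(1/3)} 9·τ(d) is implied by: τ₃(n) ≤ 3 · Σ_{d | n, d ≤ n^(1/3)} τ(n/d), where τ₃ is the 3-fold divisor function. Prove this latter inequality. -/

import Mathlib

/-- The triple divisor function `τ₃(n) = #{(a,b,c) : abc = n}`,
written as `∑_{d ∣ n} τ(n/d)`. -/
def tau3 (n : ℕ) : ℕ := ∑ d ∈ n.divisors, (n / d).divisors.card

lemma mem_sigma_facts {n : ℕ} (hn : 0 < n) {p : (_ : ℕ) × ℕ}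
    (hp : p ∈ n.divisors.sigma (fun d => (n / d).divisors)) :
    p.1 ∣ n ∧ p.1 * p.2 ∣ n ∧ p.1 * p.2 * (n / (p.1 * p.2)) = n ∧
      0 < p.1 ∧ 0 < p.2 ∧ 0 < n / (p.1 * p.2) := by
  rw [Finset.mem_sigma, Nat.mem_divisors, Nat.mem_divisors] at hp
  obtain ⟨⟨h1, -⟩, h2, -⟩ := hp
  have hab : p.1 * p.2 ∣ n := (Nat.dvd_div_iff_mul_dvd h1).mp h2
  have ha : 0 < p.1 := Nat.pos_of_dvd_of_pos h1 hn
  have hb : 0 < p.2 := by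
    rcases Nat.eq_zero_or_pos p.2 with h | h
    · exfalso; rw [h, mul_zero] at hab; exact absurd (Nat.eq_zero_of_zero_dvd hab) hn.ne'
    · exact h
  exact ⟨h1, hab, Nat.mul_div_cancel' hab, ha, hb,
    Nat.div_pos (Nat.le_of_dvd hn hab) (Nat.mul_pos ha hb)⟩

/-- For every positive integer `n`, `τ₃(n) ≤ 3 ∑_{d ∣ n, d ≤ n^(1/3)} τ(n/d)`. -/
theorem stmt3 (n : ℕ) (hn : 0 < n) :
    tau3 n ≤ 3 * ∑ d ∈ n.divisors.filter (fun d => d ^ 3 ≤ n), (n / d).divisors.card := by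
  classical
  set A := n.divisors.sigma (fun d => (n / d).divisors) with hA
  set B := (n.divisors.filter (fun d => d ^ 3 ≤ n)).sigma (fun d => (n / d).divisors) with hB
  have hAcard : tau3 n = A.card := by rw [hA, Finset.card_sigma]; rfl
  have hBcard : B.card = ∑ d ∈ n.divisors.filter (fun d => d ^ 3 ≤ n), (n / d).divisors.card := by
    rw [hB, Finset.card_sigma]
  rw [hAcard, ← hBcard]
  have h3 : 3 * B.card = ((Finset.univ : Finset (Fin 3)) ×ˢ B).card := by
    rw [Finset.card_product, Finset.card_univ, Fintype.card_fin]
  rw [h3]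
  set f : (_ : ℕ) × ℕ → Fin 3 × ((_ : ℕ) × ℕ) := fun p =>
    if p.1 ^ 3 ≤ n then (0, p)
    else if p.2 ^ 3 ≤ n then (1, ⟨p.2, p.1⟩)
    else (2, ⟨n / (p.1 * p.2), p.1⟩) with hf
  apply Finset.card_le_card_of_injOn f
  · -- maps into univ ×ˢ B
    intro p hp
    obtain ⟨h1, hab, habc, ha, hb, hc⟩ := mem_sigma_facts hn hp
    have hbn : p.2 ∣ n := dvd_trans (Dvd.intro_left p.1 rfl) hab
    have hcd : n / (p.1 * p.2) ∣ n := Nat.div_dvd_of_dvd hab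
    rw [Finset.mem_coe, Finset.mem_product]
    refine ⟨Finset.mem_univ _, ?_⟩
    rw [hf]
    simp only
    split_ifs with hc1 hc2
    · rw [hB, Finset.mem_sigma, Finset.mem_filter]
      rw [Finset.mem_coe, hA, Finset.mem_sigma] at hp
      exact ⟨⟨hp.1, hc1⟩, hp.2⟩
    · rw [hB, Finset.mem_sigma, Finset.mem_filter, Nat.mem_divisors, Nat.mem_divisors]
      refine ⟨⟨⟨hbn, hn.ne'⟩, hc2⟩, ?_, ?_⟩
      · rw [Nat.dvd_div_iff_mul_dvd hbn, mul_comm]; exact hab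
      · exact (Nat.div_pos (Nat.le_of_dvd hn hbn) hb).ne'
    · -- tag 2 : c^3 ≤ n
      set c := n / (p.1 * p.2) with hcdef
      have hcn : c ∣ n := hcd
      have hkey : c ^ 3 ≤ n := by
        have h1' : n ≤ p.1 ^ 3 := le_of_not_ge hc1
        have h2' : n ≤ p.2 ^ 3 := le_of_not_ge hc2
        have : c ^ 3 * (n * n) ≤ c ^ 3 * (p.1 ^ 3 * p.2 ^ 3) :=
          Nat.mul_le_mul_left _ (Nat.mul_le_mul h1' h2')
        have heq : c ^ 3 * (p.1 ^ 3 * p.2 ^ 3) = n ^ 3 := by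
          rw [← habc]; ring
        have hle : c ^ 3 * (n * n) ≤ n * (n * n) := by
          rw [heq] at this; calc c ^ 3 * (n * n) ≤ n ^ 3 := this
            _ = n * (n * n) := by ring
        exact Nat.le_of_mul_le_mul_right hle (Nat.mul_pos hn hn)
      rw [hB, Finset.mem_sigma, Finset.mem_filter, Nat.mem_divisors, Nat.mem_divisors]
      refine ⟨⟨⟨hcn, hn.ne'⟩, hkey⟩, ?_, (Nat.div_pos (Nat.le_of_dvd hn hcn) hc).ne'⟩
      · rw [Nat.dvd_div_iff_mul_dvd hcn]
        refine Dvd.intro p.2 ?_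
        rw [← habc]; ring
  · -- injectivity
    intro p hp q hq hfeq
    obtain ⟨hp1, hpab, hpabc, hpa, hpb, hpc⟩ := mem_sigma_facts hn hp
    obtain ⟨hq1, hqab, hqabc, hqa, hqb, hqc⟩ := mem_sigma_facts hn hq
    rw [hf] at hfeq
    simp only at hfeq
    split_ifs at hfeq with h1 h2 h3 h4 h5
    all_goals rw [Prod.mk.injEq] at hfeq
    all_goals first
      | (exact hfeq.2)
      | (exact absurd hfeq.1 (by decide))
      | skip
    · -- tag 1: ⟨p.2, p.1⟩ = ⟨q.2, q.1⟩
      have := hfeq.2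
      obtain ⟨e1, e2⟩ := Sigma.mk.inj_iff.mp this
      exact Sigma.ext (eq_of_heq e2) (heq_of_eq e1)
    · -- tag 2
      have := hfeq.2
      obtain ⟨e1, e2⟩ := Sigma.mk.inj_iff.mp this
      have ea : p.1 = q.1 := eq_of_heq e2
      have ec : n / (p.1 * p.2) = n / (q.1 * q.2) := e1
      have : p.1 * p.2 * (n / (p.1 * p.2)) = p.1 * q.2 * (n / (p.1 * p.2)) := by
        rw [hpabc]
        rw [ec, ea]
        exact hqabc.symm
      have h' : p.1 * p.2 = p.1 * q.2 := Nat.eq_of_mul_eq_mul_right hpc this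
      have eb : p.2 = q.2 := Nat.eq_of_mul_eq_mul_left hpa h'
      exact Sigma.ext ea (heq_of_eq eb)
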